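/- The identity functor on a category with finite products is a linear assignment (i.e., every object carries a natural commutative monoid object structure with the identity as idempotency isomorphism) if and only if the category is semi-additive (has finite biproducts). -/

import Mathlib

open CategoryTheory CategoryTheory.Limits

/-- A linear assignment structure on the identity functor of a category with finite
products: every object carries a commutative monoid object structure, naturally in the
object, with the identity serving as the idempotency isomorphism `ν`. -/
structure IdLinearAssignment (C : Type*) [Category C] [HasFiniteProducts C] where
  plus : ∀ X : C, X ⨯ X ⟶ X
  zero : ∀ X : C, ⊤_ C ⟶ X
  plus_natural : ∀ {X Y : C} (f : X ⟶ Y), prod.map f f ≫ plus Y = plus X ≫ f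
  zero_natural : ∀ {X Y : C} (f : X ⟶ Y), zero X ≫ f = zero Y
  plus_assoc : ∀ X : C, prod.map (plus X) (𝟙 X) ≫ plus X =
    (Limits.prod.associator X X X).hom ≫ prod.map (𝟙 X) (plus X) ≫ plus X
  plus_comm : ∀ X : C, (prod.braiding X X).hom ≫ plus X = plus X
  plus_unit : ∀ X : C, prod.lift (terminal.from X ≫ zero X) (𝟙 X) ≫ plus X = 𝟙 X

namespace Stmt9Aux

universe v u

variable {C : Type u} [Category.{v} C] [HasFiniteProducts C]

section Forward

variable (L : IdLinearAssignment C)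

/-- The candidate zero morphism. -/
noncomputable def hzero (X Y : C) : X ⟶ Y := terminal.from X ≫ L.zero Y

/-- The candidate addition of morphisms. -/
noncomputable def hadd {X Y : C} (f g : X ⟶ Y) : X ⟶ Y := prod.lift f g ≫ L.plus Y

lemma hzero_comp {X Y Z : C} (f : Y ⟶ Z) : hzero L X Y ≫ f = hzero L X Z := by
  simp only [hzero, Category.assoc, L.zero_natural]

lemma comp_hzero {X Y Z : C} (f : X ⟶ Y) : f ≫ hzero L Y Z = hzero L X Z := by
  simp only [hzero, ← Category.assoc, terminal.comp_from]

lemma hadd_comp {X Y Z : C} (f g : X ⟶ Y) (h : Y ⟶ Z) :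
    hadd L f g ≫ h = hadd L (f ≫ h) (g ≫ h) := by
  rw [hadd, hadd, Category.assoc, ← L.plus_natural h, ← Category.assoc, prod.lift_map]

lemma comp_hadd {X Y Z : C} (f : X ⟶ Y) (g h : Y ⟶ Z) :
    f ≫ hadd L g h = hadd L (f ≫ g) (f ≫ h) := by
  simp only [hadd, ← Category.assoc, prod.comp_lift]

lemma hadd_comm {X Y : C} (f g : X ⟶ Y) : hadd L f g = hadd L g f := by
  have : prod.lift g f ≫ (prod.braiding Y Y).hom = prod.lift f g := by
    apply prod.hom_ext <;> simp only [Category.assoc, prod.braiding_hom, prod.lift_fst, prod.lift_snd]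
  rw [hadd, ← this, Category.assoc, L.plus_comm, hadd]

lemma hzero_hadd {X Y : C} (f : X ⟶ Y) : hadd L (hzero L X Y) f = f := by
  have : prod.lift (hzero L X Y) f =
      f ≫ prod.lift (terminal.from Y ≫ L.zero Y) (𝟙 Y) := by
    rw [prod.comp_lift, Category.comp_id, hzero, ← Category.assoc, terminal.comp_from]
  rw [hadd, this, Category.assoc, L.plus_unit, Category.comp_id]

lemma hadd_hzero {X Y : C} (f : X ⟶ Y) : hadd L f (hzero L X Y) = f := by
  rw [hadd_comm, hzero_hadd]

/-- Sum of a list of parallel morphisms. -/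
noncomputable def hsumList {X Y : C} : List (X ⟶ Y) → (X ⟶ Y)
  | [] => hzero L X Y
  | a :: l => hadd L a (hsumList l)

lemma hsumList_comp {X Y Z : C} (h : Y ⟶ Z) (l : List (X ⟶ Y)) :
    hsumList L l ≫ h = hsumList L (l.map (· ≫ h)) := by
  induction l with
  | nil => simp [hsumList, hzero_comp]
  | cons a l ih => rw [List.map_cons, hsumList, hsumList, hadd_comp, ih]

lemma comp_hsumList {X Y Z : C} (h : X ⟶ Y) (l : List (Y ⟶ Z)) :
    h ≫ hsumList L l = hsumList L (l.map (h ≫ ·)) := by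
  induction l with
  | nil => simp [hsumList, comp_hzero]
  | cons a l ih => rw [List.map_cons, hsumList, hsumList, comp_hadd, ih]

lemma hsumList_hzero {X Y : C} (l : List (X ⟶ Y)) (hl : ∀ x ∈ l, x = hzero L X Y) :
    hsumList L l = hzero L X Y := by
  induction l with
  | nil => rfl
  | cons a l ih =>
    rw [hsumList, hl a (List.mem_cons_self),
      ih fun x hx => hl x (List.mem_cons_of_mem a hx), hzero_hadd]

lemma hsumList_delta {J : Type} {X Y : C} (g : J → (X ⟶ Y)) (l : List J)
    (hnd : l.Nodup) (k : J) (hk : k ∈ l) (hg : ∀ j ∈ l, j ≠ k → g j = hzero L X Y) :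
    hsumList L (l.map g) = g k := by
  induction l with
  | nil => exact absurd hk (List.not_mem_nil)
  | cons a l ih =>
    obtain ⟨ha, hl⟩ := List.nodup_cons.1 hnd
    rcases List.mem_cons.1 hk with rfl | hk'
    · rw [List.map_cons, hsumList,
        hsumList_hzero L _ (by
          intro x hx
          obtain ⟨j, hj, rfl⟩ := List.mem_map.1 hx
          exact hg j (List.mem_cons_of_mem _ hj) (fun h => ha (h ▸ hj))),
        hadd_hzero]
    · have hak : a ≠ k := fun h => ha (h ▸ hk')
      rw [List.map_cons, hsumList, hg a (List.mem_cons_self) hak, hzero_hadd]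
      exact ih hl hk' fun j hj => hg j (List.mem_cons_of_mem _ hj)

/-- The zero-morphism structure coming from a linear assignment on the identity. -/
noncomputable def mkZ : HasZeroMorphisms C where
  zero X Y := ⟨hzero L X Y⟩
  comp_zero f Z := comp_hzero L f
  zero_comp X {Y Z} f := hzero_comp L f

section Bicones

variable [HasZeroMorphisms C]

/-- Any finite product is a biproduct. -/
noncomputable def limitBicone (hz : ∀ X Y : C, (0 : X ⟶ Y) = hzero L X Y) {n : ℕ} (f : Fin n → C) : LimitBicone f := by
  let t := limit.isLimit (Discrete.functor f)
  let b : Bicone f := Bicone.ofLimitCone t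
  have total : hsumList L ((List.finRange n).map fun j => b.π j ≫ b.ι j) = 𝟙 b.pt := by
    apply limit.hom_ext
    rintro ⟨k⟩
    change hsumList L _ ≫ b.π k = 𝟙 b.pt ≫ b.π k
    rw [hsumList_comp, List.map_map, Category.id_comp,
      hsumList_delta L _ (List.finRange n) (List.nodup_finRange n) k (List.mem_finRange _)
        (by
          intro j _ hj
          simp only [Function.comp_apply, Category.assoc]
          rw [b.ι_π, dif_neg hj, hz]
          exact (comp_hzero L _).trans rfl)]
    simp only [Function.comp_apply, Category.assoc]
    rw [b.ι_π, dif_pos rfl]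
    simp
  refine ⟨b, ⟨t.ofIsoLimit (Cones.ext (Iso.refl _) ?_), ?_⟩⟩
  · rintro ⟨j⟩
    simp [b, Bicone.toCone]
    exact (Category.id_comp _).symm
  · refine IsColimit.mk (fun s => hsumList L ((List.finRange n).map fun j =>
      b.π j ≫ s.ι.app ⟨j⟩)) ?_ ?_
    · rintro s ⟨j⟩
      show b.ι j ≫ (hsumList L ((List.finRange n).map fun j => b.π j ≫ s.ι.app ⟨j⟩) :
        b.pt ⟶ s.pt) = _
      rw [comp_hsumList, List.map_map,
        hsumList_delta L _ (List.finRange n) (List.nodup_finRange n) j (List.mem_finRange _)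
          (by
            intro k _ hk
            simp only [Function.comp_apply, ← Category.assoc]
            rw [b.ι_π, dif_neg (Ne.symm hk), hz, hzero_comp])]
      simp only [Function.comp_apply, ← Category.assoc]
      rw [b.ι_π, dif_pos rfl]
      simp
    · intro s m hm
      change b.pt ⟶ s.pt at m
      show (m : b.pt ⟶ s.pt) = (hsumList L ((List.finRange n).map fun j =>
        b.π j ≫ s.ι.app ⟨j⟩) : b.pt ⟶ s.pt)
      have h1 : m = (hsumList L ((List.finRange n).map fun j => b.π j ≫ b.ι j)) ≫ m := by
        rw [total, Category.id_comp]
      rw [h1, hsumList_comp, List.map_map]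
      exact congrArg (hsumList L) (List.map_congr_left fun j _ => by
        simp only [Function.comp_apply, Category.assoc]
        rw [show b.ι j ≫ m = s.ι.app ⟨j⟩ from hm ⟨j⟩])

end Bicones

theorem mkHFB : @HasFiniteBiproducts C _ (mkZ L) := by
  letI := mkZ L
  exact ⟨fun n => ⟨fun f => HasBiproduct.mk (limitBicone L (fun X Y => rfl) f)⟩⟩

end Forward

section Backward

open SemiadditiveOfBinaryBiproducts

attribute [local instance] SemiadditiveOfBinaryBiproducts.addCommMonoidHomOfHasBinaryBiproducts

noncomputable def backward [HasZeroMorphisms C] [HasFiniteBiproducts C] :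
    IdLinearAssignment C := by
  letI : HasBinaryBiproducts C := hasBinaryBiproducts_of_finite_biproducts C
  exact
  { plus := fun X => prod.fst + prod.snd
    zero := fun X => 0
    plus_natural := fun {X Y} f => by
      rw [comp_add, add_comp, prod.map_fst, prod.map_snd]
    zero_natural := fun {X Y} f => by rw [zero_comp]
    plus_assoc := fun X => by
      simp only [comp_add, add_comp, prod.map_fst, prod.map_snd, Category.comp_id,
        Category.id_comp, Category.assoc, prod.associator_hom, prod.lift_fst,
        prod.lift_snd, prod.lift_fst_assoc, prod.lift_snd_assoc]
      abel
    plus_comm := fun X => by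
      rw [comp_add]
      simp only [prod.braiding_hom, prod.lift_fst, prod.lift_snd]
      rw [add_comm]
    plus_unit := fun X => by
      rw [comp_add, prod.lift_fst, prod.lift_snd, comp_zero, zero_add] }

end Backward

end Stmt9Aux

/-- The identity functor on a category with finite products is a linear assignment (with the
identity as idempotency isomorphism) if and only if the category is semi-additive, i.e. has
finite biproducts. -/
theorem stmt9 (C : Type*) [Category C] [HasFiniteProducts C] :
    Nonempty (IdLinearAssignment C) ↔
      ∃ Z : HasZeroMorphisms C, @HasFiniteBiproducts C _ Z := by
  constructor
  · rintro ⟨L⟩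
    exact ⟨Stmt9Aux.mkZ L, Stmt9Aux.mkHFB L⟩
  · rintro ⟨Z, HB⟩
    exact ⟨Stmt9Aux.backward⟩
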